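/- Let (X, τ, I) be an ideal topological space and f : X → X continuous and I-transitive. If A ⊆ X is closed, f(X \ A) ⊆ X \ A, and A ≠ X, then ψ(A*) = ∅, where A* is the local function of A and ψ(B) = X \ (X \ B)*. -/

import Mathlib

open Set Function Topology TopologicalSpace

variable {X : Type*}

/-- An ideal of sets: contains ∅, downward closed, closed under finite unions. -/
def IsIdealSet (I : Set (Set X)) : Prop :=
  ∅ ∈ I ∧ (∀ A B : Set X, A ∈ I → B ⊆ A → B ∈ I) ∧
    (∀ A B : Set X, A ∈ I → B ∈ I → A ∪ B ∈ I)

variable [TopologicalSpace X]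

/-- I is codense: the only open member of I is ∅. -/
def Codense (I : Set (Set X)) : Prop := ∀ U : Set X, IsOpen U → U ∈ I → U = ∅

/-- topological transitivity -/
def TopTrans (f : X → X) : Prop :=
  ∀ U V : Set X, IsOpen U → IsOpen V → U.Nonempty → V.Nonempty →
    ∃ n : ℕ, 0 < n ∧ (f^[n] '' U ∩ V).Nonempty

/-- I-transitivity -/
def ITrans (I : Set (Set X)) (f : X → X) : Prop :=
  ∀ U V : Set X, IsOpen U → IsOpen V → U.Nonempty → V.Nonempty →
    ∃ n : ℕ, 0 < n ∧ f^[n] '' U ∩ V ∉ I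

/-- Kuratowski local function A* -/
def locFn (I : Set (Set X)) (A : Set X) : Set X :=
  {x | ∀ U : Set X, IsOpen U → x ∈ U → U ∩ A ∉ I}

/-- ψ(A) = X \ (X \ A)* -/
def psiOp (I : Set (Set X)) (A : Set X) : Set X := (locFn I Aᶜ)ᶜ

/-- A is I-dense: meets every nonempty open set in a set not in I. -/
def IDense (I : Set (Set X)) (A : Set X) : Prop :=
  ∀ O : Set X, IsOpen O → O.Nonempty → A ∩ O ∉ I

/-- I is compatible with the topology (I ∼ τ). -/
def Compat (I : Set (Set X)) : Prop :=
  ∀ A : Set X, (∀ x ∈ A, ∃ O : Set X, IsOpen O ∧ x ∈ O ∧ O ∩ A ∈ I) → A ∈ I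

/-- countable additivity -/
def CountablyAdditive (I : Set (Set X)) : Prop :=
  ∀ g : ℕ → Set X, (∀ n, g n ∈ I) → (⋃ n, g n) ∈ I

/-- preopen set -/
def Preopen (A : Set X) : Prop := A ⊆ interior (closure A)

/-- completely codense ideal -/
def CompletelyCodense (I : Set (Set X)) : Prop :=
  ∀ A : Set X, Preopen A → A ∈ I → A = ∅

theorem stmt6 (I : Set (Set X)) (f : X → X) (hI : IsIdealSet I)
    (hf : Continuous f) (htrans : ITrans I f) (A : Set X) (hA : IsClosed A)
    (hinv : f '' Aᶜ ⊆ Aᶜ) (hne : A ≠ Set.univ) :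
    psiOp I (locFn I A) = ∅ := by
  -- A* ⊆ A since A is closed and ∅ ∈ I
  have hstar : locFn I A ⊆ A := by
    intro x hx
    by_contra hxA
    have h := hx Aᶜ hA.isOpen_compl hxA
    apply h
    have : Aᶜ ∩ A = (∅ : Set X) := by simp
    rw [this]; exact hI.1
  -- iterates preserve Aᶜ
  have hiter : ∀ n : ℕ, f^[n] '' Aᶜ ⊆ Aᶜ := by
    intro n
    induction n with
    | zero => simp
    | succ n ih =>
      rw [Function.iterate_succ', Set.image_comp]
      exact (Set.image_mono (f := f) ih).trans hinv
  have hAc : (Aᶜ : Set X).Nonempty := by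
    rw [Set.nonempty_compl]; exact hne
  rw [psiOp, Set.compl_empty_iff]
  ext x
  simp only [Set.mem_univ, iff_true, locFn, Set.mem_setOf_eq]
  intro U hUopen hxU hmem
  obtain ⟨n, hn, hnI⟩ := htrans Aᶜ U hA.isOpen_compl hUopen hAc ⟨x, hxU⟩
  apply hnI
  refine hI.2.1 _ _ hmem ?_
  intro y ⟨hy1, hy2⟩
  exact ⟨hy2, fun hy3 => (hiter n hy1) (hstar hy3)⟩
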